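/- Let R be a p×p correlation matrix with entries r_{ij} = τ_i τ_j Θ_{ij} where Θ = Σ⁻¹ for a positive definite Σ and τ_i = Θ_{ii}^{-1/2}. Then (1/p)(Σ_{i,j} r_{ij}²)^{1/2} ≤ c/√p where c = λ_max(Σ)/λ_min(Σ). Hence if c(p)/√p → 0 then (1/p)(Σ_{i,j} r_{ij}²)^{1/2} → 0. -/

import Mathlib

open Matrix Filter BigOperators


variable {m : ℕ}

lemma aux_gen_inv (A U : Matrix (Fin (m+1)) (Fin (m+1)) ℝ) (d : Fin (m+1) → ℝ)
    (hd : ∀ k, d k ≠ 0) (h1 : U * star U = 1) (h2 : star U * U = 1)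
    (hspec : A = U * diagonal d * star U) :
    A⁻¹ = U * diagonal (fun k => (d k)⁻¹) * star U := by
  subst hspec
  apply inv_eq_right_inv
  calc U * diagonal d * star U * (U * diagonal (fun k => (d k)⁻¹) * star U)
      = U * (diagonal d * ((star U * U) * diagonal (fun k => (d k)⁻¹))) * star U := by
        noncomm_ring
    _ = 1 := by
        rw [h2, one_mul, diagonal_mul_diagonal]
        have : (fun k => d k * (d k)⁻¹) = fun _ => (1:ℝ) := by
          funext k; exact mul_inv_cancel₀ (hd k)
        rw [this, diagonal_one, mul_one, h1]

lemma aux_spec (A : Matrix (Fin (m+1)) (Fin (m+1)) ℝ) (hA : A.IsHermitian) :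
    A = (hA.eigenvectorUnitary : Matrix (Fin (m+1)) (Fin (m+1)) ℝ)
      * diagonal hA.eigenvalues
      * star (hA.eigenvectorUnitary : Matrix (Fin (m+1)) (Fin (m+1)) ℝ) := by
  have hofr : (RCLike.ofReal ∘ hA.eigenvalues : Fin (m+1) → ℝ) = hA.eigenvalues := by
    funext k; simp
  have := hA.spectral_theorem
  rwa [hofr] at this

lemma aux_entry (U : Matrix (Fin (m+1)) (Fin (m+1)) ℝ) (d : Fin (m+1) → ℝ) (i j : Fin (m+1)) :
    (U * diagonal d * star U) i j = ∑ k, (d k) * (U i k * U j k) := by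
  simp [mul_apply, mul_diagonal, Matrix.star_apply, diagonal, Finset.sum_ite_eq, Finset.mul_sum]
  congr 1; funext k; ring

lemma aux_row (U : Matrix (Fin (m+1)) (Fin (m+1)) ℝ) (h1 : U * star U = 1) (i : Fin (m+1)) :
    ∑ k, U i k * U i k = 1 := by
  have := congrArg (fun M => M i i) h1
  simpa [mul_apply, Matrix.star_apply] using this

lemma aux_frob (U : Matrix (Fin (m+1)) (Fin (m+1)) ℝ) (d : Fin (m+1) → ℝ)
    (h1 : U * star U = 1) (h2 : star U * U = 1) :
    ∑ i, ∑ j, ((U * diagonal d * star U) i j)^2 = ∑ k, (d k)^2 := by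
  set B := U * diagonal d * star U with hB
  have hBt : Bᵀ = B := by
    rw [hB, transpose_mul, transpose_mul, diagonal_transpose]
    rw [Matrix.star_eq_conjTranspose, conjTranspose_eq_transpose_of_trivial,
      transpose_transpose, mul_assoc]
  have h1' : ∑ i, ∑ j, (B i j)^2 = trace (B * Bᵀ) := by
    simp [trace, Matrix.diag, mul_apply, transpose_apply, sq]
  rw [h1', hBt]
  have hBB : B * B = U * diagonal (fun k => d k * d k) * star U := by
    rw [hB]
    calc U * diagonal d * star U * (U * diagonal d * star U)
        = U * (diagonal d * ((star U * U) * diagonal d)) * star U := by noncomm_ring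
      _ = U * diagonal (fun k => d k * d k) * star U := by
          rw [h2, one_mul, diagonal_mul_diagonal]
  rw [hBB, trace_mul_cycle, h2, one_mul, trace_diagonal]
  simp [sq]
  

/-- For the correlation matrix `R` with entries `r_{ij} = τ_i τ_j Θ_{ij}`
(`Θ = Σ⁻¹`, `τ_i = Θ_{ii}^{-1/2}`), one has `(1/p)(∑_{i,j} r_{ij}²)^{1/2} ≤ c/√p`
with `c = λ_max(Σ)/λ_min(Σ)`; hence if `c(p)/√p → 0` then
`(1/p)(∑_{i,j} r_{ij}²)^{1/2} → 0`. (Here dimension is `p + 1`.) -/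
theorem stmt11 (S : ∀ p : ℕ, Matrix (Fin (p + 1)) (Fin (p + 1)) ℝ)
    (hpd : ∀ p, (S p).PosDef)
    (lammax lammin : ℕ → ℝ)
    (hmax : ∀ p, lammax p = Finset.univ.sup' Finset.univ_nonempty (hpd p).1.eigenvalues)
    (hmin : ∀ p, lammin p = Finset.univ.inf' Finset.univ_nonempty (hpd p).1.eigenvalues)
    (c : ℕ → ℝ) (hc : ∀ p, c p = lammax p / lammin p)
    (r : ∀ p : ℕ, Matrix (Fin (p + 1)) (Fin (p + 1)) ℝ)
    (hr : ∀ p i j, r p i j =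
      Real.sqrt (1 / ((S p)⁻¹ i i)) * Real.sqrt (1 / ((S p)⁻¹ j j)) * (S p)⁻¹ i j) :
    (∀ p : ℕ, (1 / ((p : ℝ) + 1)) * Real.sqrt (∑ i, ∑ j, (r p i j) ^ 2) ≤
      c p / Real.sqrt ((p : ℝ) + 1)) ∧
    (Tendsto (fun p : ℕ => c p / Real.sqrt ((p : ℝ) + 1)) atTop (nhds 0) →
      Tendsto (fun p : ℕ => (1 / ((p : ℝ) + 1)) * Real.sqrt (∑ i, ∑ j, (r p i j) ^ 2))
        atTop (nhds 0)) := by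
  have key : ∀ p : ℕ, (1 / ((p : ℝ) + 1)) * Real.sqrt (∑ i, ∑ j, (r p i j) ^ 2) ≤
      c p / Real.sqrt ((p : ℝ) + 1) := by
    intro p
    set A := S p with hA
    set H := (hpd p).1 with hH
    set U := (H.eigenvectorUnitary : Matrix (Fin (p+1)) (Fin (p+1)) ℝ) with hUdef
    set d := H.eigenvalues with hd
    set M := lammax p with hMdef
    set μ := lammin p with hmudef
    have hdpos : ∀ k, 0 < d k := fun k => (hpd p).eigenvalues_pos k
    have hdM : ∀ k, d k ≤ M := by
      intro k; rw [hMdef, hmax p]; exact Finset.le_sup' _ (Finset.mem_univ k)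
    have hμd : ∀ k, μ ≤ d k := by
      intro k; rw [hmudef, hmin p]; exact Finset.inf'_le _ (Finset.mem_univ k)
    have hμ : 0 < μ := by
      rw [hmudef, hmin p]; exact (Finset.lt_inf'_iff _).mpr (fun k _ => hdpos k)
    have hM : 0 < M := lt_of_lt_of_le hμ ((hμd 0).trans (hdM 0))
    have h1 : U * star U = 1 := mem_unitaryGroup_iff.mp H.eigenvectorUnitary.2
    have h2 : star U * U = 1 := mem_unitaryGroup_iff'.mp H.eigenvectorUnitary.2
    have hinv : A⁻¹ = U * diagonal (fun k => (d k)⁻¹) * star U :=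
      aux_gen_inv A U d (fun k => (hdpos k).ne') h1 h2 (aux_spec A H)
    have hentry : ∀ i j, A⁻¹ i j = ∑ k, (d k)⁻¹ * (U i k * U j k) := by
      intro i j; rw [hinv]; exact aux_entry U (fun k => (d k)⁻¹) i j
    have hdiag : ∀ i, M⁻¹ ≤ A⁻¹ i i := by
      intro i
      rw [hentry i i]
      calc M⁻¹ = ∑ k, M⁻¹ * (U i k * U i k) := by
            rw [← Finset.mul_sum, aux_row U h1 i, mul_one]
        _ ≤ ∑ k, (d k)⁻¹ * (U i k * U i k) := by
            apply Finset.sum_le_sum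
            intro k _
            exact mul_le_mul_of_nonneg_right
              (inv_anti₀ (hdpos k) (hdM k)) (mul_self_nonneg _)
    have hdiagpos : ∀ i, 0 < A⁻¹ i i := fun i => lt_of_lt_of_le (inv_pos.mpr hM) (hdiag i)
    have hdiaginv : ∀ i, 1 / (A⁻¹ i i) ≤ M := by
      intro i
      rw [div_le_iff₀ (hdiagpos i)]
      calc (1:ℝ) = M * M⁻¹ := (mul_inv_cancel₀ hM.ne').symm
        _ ≤ M * A⁻¹ i i := by exact mul_le_mul_of_nonneg_left (hdiag i) hM.le
    -- bound the sum of squares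
    have hfrob : ∑ i, ∑ j, (A⁻¹ i j)^2 = ∑ k, ((d k)⁻¹)^2 := by
      rw [hinv]; exact aux_frob U _ h1 h2
    have hsum : ∑ i, ∑ j, (r p i j)^2 ≤ ((p:ℝ)+1) * (M / μ)^2 := by
      have step1 : ∀ i j, (r p i j)^2 ≤ M * M * (A⁻¹ i j)^2 := by
        intro i j
        rw [hr p i j]
        have hii : (0:ℝ) ≤ 1 / (A⁻¹ i i) := (one_div_pos.mpr (hdiagpos i)).le
        have hjj : (0:ℝ) ≤ 1 / (A⁻¹ j j) := (one_div_pos.mpr (hdiagpos j)).le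
        rw [mul_pow, mul_pow, Real.sq_sqrt hii, Real.sq_sqrt hjj]
        apply mul_le_mul_of_nonneg_right _ (sq_nonneg _)
        exact mul_le_mul (hdiaginv i) (hdiaginv j) hjj hM.le
      calc ∑ i, ∑ j, (r p i j)^2 ≤ ∑ i, ∑ j, M * M * (A⁻¹ i j)^2 :=
            Finset.sum_le_sum (fun i _ => Finset.sum_le_sum (fun j _ => step1 i j))
        _ = M * M * ∑ i, ∑ j, (A⁻¹ i j)^2 := by
            rw [Finset.mul_sum]; congr 1; funext i; rw [Finset.mul_sum]
        _ = M * M * ∑ k, ((d k)⁻¹)^2 := by rw [hfrob]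
        _ ≤ M * M * ∑ k : Fin (p+1), (μ⁻¹)^2 := by
            apply mul_le_mul_of_nonneg_left _ (by positivity)
            apply Finset.sum_le_sum
            intro k _
            exact pow_le_pow_left₀ (inv_nonneg.mpr (hdpos k).le)
              (inv_anti₀ hμ (hμd k)) 2
        _ = ((p:ℝ)+1) * (M / μ)^2 := by
            rw [Finset.sum_const, Finset.card_univ, Fintype.card_fin]
            push_cast
            field_simp
            ring_nf
            rw [← mul_pow, mul_inv_cancel₀ hμ.ne']
            ring
    have hp1 : (0:ℝ) < (p:ℝ) + 1 := by positivity
    have hsqrt : Real.sqrt (∑ i, ∑ j, (r p i j)^2) ≤ Real.sqrt ((p:ℝ)+1) * (M / μ) := by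
      calc Real.sqrt (∑ i, ∑ j, (r p i j)^2) ≤ Real.sqrt (((p:ℝ)+1) * (M / μ)^2) :=
            Real.sqrt_le_sqrt hsum
        _ = Real.sqrt ((p:ℝ)+1) * (M / μ) := by
            rw [Real.sqrt_mul hp1.le, Real.sqrt_sq (by positivity)]
    rw [hc p, ← hMdef, ← hmudef]
    calc (1 / ((p : ℝ) + 1)) * Real.sqrt (∑ i, ∑ j, (r p i j) ^ 2)
        ≤ (1 / ((p : ℝ) + 1)) * (Real.sqrt ((p:ℝ)+1) * (M / μ)) := by
          exact mul_le_mul_of_nonneg_left hsqrt (by positivity)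
      _ = M / μ / Real.sqrt ((p:ℝ)+1) := by
          have hs : Real.sqrt ((p:ℝ)+1) * Real.sqrt ((p:ℝ)+1) = (p:ℝ)+1 :=
            Real.mul_self_sqrt hp1.le
          rw [eq_div_iff (by positivity : Real.sqrt ((p:ℝ)+1) ≠ 0)]
          calc (1/((p:ℝ)+1)) * (Real.sqrt ((p:ℝ)+1) * (M/μ)) * Real.sqrt ((p:ℝ)+1)
              = (Real.sqrt ((p:ℝ)+1) * Real.sqrt ((p:ℝ)+1)) / ((p:ℝ)+1) * (M/μ) := by ring
            _ = M/μ := by rw [hs]; field_simp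
  refine ⟨key, fun hcp => ?_⟩
  apply squeeze_zero (fun p => ?_) key hcp
  positivity
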